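/- Fix real numbers M and β with (5+β) ≠ 0 and (2M−β−1) ≠ 0. Define the polynomial P̃₂(x) = x² − (2(4M−β−1)/((5+β)(2M−β−1))) x + 2(β+1)/((5+β)(2M−β−1)) and the number λ̃₂ = (β+3)(16β+16−64M). Then for every real x ≠ 0, (L₀ P̃₂)(x) = λ̃₂ · P̃₂(x). -/

import Mathlib

/-- The third-order differential-difference operator `L₀` of Dunkl type with
parameters `M, β`, acting on functions on `ℝ∖{0}`.  With `g(x) := f(−x)`, so that
`g'(x) = −f'(−x)`, `g''(x) = f''(−x)`, `g'''(x) = −f'''(−x)`, it reads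
`(L₀f)(x) = (−8M+8Mx+8Mx²−8Mx³)g'''(x)
 + [−12M/x+24M+4βM+(36M+8βM)x−(12βM+48M)x²]g''(x)
 + (12Mx+4βMx²−12M/x−4βM)f''(x)
 + [(24M+16βM−8β²−32β−24)+24M/x²+(4β−12)M/x+(8β²−36βM−48M−4β²M+32β+24)x]g'(x)
 + [(4β²M+12βM)x−(12+4β)M/x+24M+8βM]f'(x)
 + [12M/x³+4βM/x²+(12+4β²+4βM+16β)/x+(8βM+4β²M−44β−24−4β³−24β²)](f(x)−f(−x))`. -/
noncomputable def L0 (M β : ℝ) (f : ℝ → ℝ) (x : ℝ) : ℝ :=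
  (-8 * M + 8 * M * x + 8 * M * x ^ 2 - 8 * M * x ^ 3) * (-(deriv^[3] f (-x))) +
    (-12 * M / x + 24 * M + 4 * β * M + (36 * M + 8 * β * M) * x -
        (12 * β * M + 48 * M) * x ^ 2) * (deriv^[2] f (-x)) +
    (12 * M * x + 4 * β * M * x ^ 2 - 12 * M / x - 4 * β * M) * (deriv^[2] f x) +
    ((24 * M + 16 * β * M - 8 * β ^ 2 - 32 * β - 24) + 24 * M / x ^ 2 +
        (4 * β - 12) * M / x +
        (8 * β ^ 2 - 36 * β * M - 48 * M - 4 * β ^ 2 * M + 32 * β + 24) * x) *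
      (-(deriv f (-x))) +
    ((4 * β ^ 2 * M + 12 * β * M) * x - (12 + 4 * β) * M / x + 24 * M + 8 * β * M) *
      (deriv f x) +
    (12 * M / x ^ 3 + 4 * β * M / x ^ 2 +
        (12 + 4 * β ^ 2 + 4 * β * M + 16 * β) / x +
        (8 * β * M + 4 * β ^ 2 * M - 44 * β - 24 - 4 * β ^ 3 - 24 * β ^ 2)) *
      (f x - f (-x))



lemma quad_deriv (a b : ℝ) :
    deriv (fun t : ℝ => t ^ 2 - a * t + b) = fun t => 2 * t - a := by
  funext t
  have h : HasDerivAt (fun t : ℝ => t ^ 2 - a * t + b) (2 * t - a) t := by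
    have := (((hasDerivAt_pow 2 t).sub ((hasDerivAt_id t).const_mul a)).add_const b)
    simpa using this
  exact h.deriv

lemma quad_deriv2 (a b : ℝ) :
    deriv^[2] (fun t : ℝ => t ^ 2 - a * t + b) = fun _ => 2 := by
  have h1 := quad_deriv a b
  show deriv (deriv _) = _
  rw [h1]
  funext t
  have h : HasDerivAt (fun t : ℝ => 2 * t - a) 2 t := by
    simpa using ((hasDerivAt_id t).const_mul 2).sub_const a
  exact h.deriv

lemma quad_deriv3 (a b : ℝ) :
    deriv^[3] (fun t : ℝ => t ^ 2 - a * t + b) = fun _ => 0 := by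
  show deriv (deriv^[2] _) = _
  rw [quad_deriv2 a b]
  funext t
  simp

/-- The degree-2 monic −1 Krall-Jacobi polynomial
`P̃₂(x) = x² − (2(4M−β−1)/((5+β)(2M−β−1)))x + 2(β+1)/((5+β)(2M−β−1))`
is an eigenfunction of `L₀` with eigenvalue `λ̃₂ = (β+3)(16β+16−64M)`. -/
theorem L0_eigen_degree_two (M β : ℝ) (h1 : 5 + β ≠ 0) (h2 : 2 * M - β - 1 ≠ 0)
    (x : ℝ) (hx : x ≠ 0) :
    L0 M β (fun t => t ^ 2 - 2 * (4 * M - β - 1) / ((5 + β) * (2 * M - β - 1)) * t +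
        2 * (β + 1) / ((5 + β) * (2 * M - β - 1))) x =
      (β + 3) * (16 * β + 16 - 64 * M) *
        (x ^ 2 - 2 * (4 * M - β - 1) / ((5 + β) * (2 * M - β - 1)) * x +
          2 * (β + 1) / ((5 + β) * (2 * M - β - 1))) := by
  have ha : ∀ t : ℝ, 2 * (4 * M - β - 1) / ((5 + β) * (2 * M - β - 1)) * t
      = (2 * (4 * M - β - 1) / ((5 + β) * (2 * M - β - 1))) * t := fun t => rfl
  unfold L0
  rw [quad_deriv, quad_deriv2, quad_deriv3]
  have hd : (5 + β) * (2 * M - β - 1) ≠ 0 := mul_ne_zero h1 h2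
  have h2' : -1 + M * 2 - β ≠ 0 := by contrapose! h2; linarith
  field_simp
  ring_nf
  field_simp
  ring
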